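/- Let G = (V, w) be a finite directed graph with positive integer edge-source weights w : V → ℕ, w(v) ≥ 1, in which every vertex lies on a path from a designated set and the graph contains at least one cycle. Then sup over infinite paths p = (v_0, v_1, ...) of limsup_n n / (∑_{i<n} w(v_i)) equals 1 / μ*, where μ* is the minimum over cycles C of (∑_{v ∈ C} w(v)) / |C| (minimum mean cycle weight), and the supremum is attained by an eventually periodic path following a minimum-mean cycle. -/

import Mathlib

open Finset Filter

section aux
set_option linter.unusedSectionVars false
set_option linter.unusedVariables false
set_option maxHeartbeats 1000000
variable {V : Type*} [Fintype V] {E : V → V → Prop}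

lemma window_cycle (p : ℕ → V) (hp : ∀ i, E (p i) (p (i + 1)))
    {i j : ℕ} (hij : i < j) (hpij : p i = p j) :
    ∃ c : ℕ → V, (∀ k, c (k + (j - i)) = c k) ∧ (∀ k, E (c k) (c (k + 1))) ∧
      ∀ f : V → ℝ, ∑ k ∈ Finset.range (j - i), f (c k) = ∑ k ∈ Finset.Ico i j, f (p k) := by
  set m := j - i with hm
  have hm0 : 0 < m := by omega
  refine ⟨fun k => p (i + k % m), fun k => by simp [Nat.add_mod_right], ?_, ?_⟩
  · intro k
    have h1 : (k + 1) % m = (k % m + 1) % m := (Nat.mod_add_mod k m 1).symm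
    have hr : k % m < m := Nat.mod_lt _ hm0
    rcases eq_or_lt_of_le (Nat.succ_le_of_lt hr) with h | h
    · -- k % m + 1 = m, wraps
      have h2 : (k + 1) % m = 0 := by simp only [Nat.succ_eq_add_one] at h; rw [h1, h, Nat.mod_self]
      simp only [h2]
      have hj : i + k % m + 1 = j := by omega
      have := hp (i + k % m)
      rw [hj] at this
      simpa [← hpij] using this
    · have h2 : (k + 1) % m = k % m + 1 := by rw [h1, Nat.mod_eq_of_lt h]
      simp only [h2]
      have := hp (i + k % m)
      simpa [Nat.add_assoc] using this
  · intro f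
    rw [Finset.sum_Ico_eq_sum_range]
    apply Finset.sum_congr rfl
    intro k hk
    simp only []
    rw [Nat.mod_eq_of_lt (Finset.mem_range.mp hk)]

/-- Lower bound on weight sums along any path. -/
lemma path_sum_lower (w : V → ℕ) {μ : ℝ} (hμ0 : 0 ≤ μ)
    (hcb : ∀ (c : ℕ → V) (m : ℕ), 0 < m → (∀ k, c (k + m) = c k) →
      (∀ k, E (c k) (c (k + 1))) → μ * m ≤ ∑ k ∈ Finset.range m, (w (c k) : ℝ)) :
    ∀ (n : ℕ) (p : ℕ → V), (∀ i, E (p i) (p (i + 1))) →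
      μ * n - μ * (Fintype.card V) ≤ ∑ k ∈ Finset.range n, (w (p k) : ℝ) := by
  intro n
  induction n using Nat.strong_induction_on with
  | _ n ih =>
    intro p hp
    set N := Fintype.card V with hN
    have hnn : (0:ℝ) ≤ ∑ k ∈ Finset.range n, (w (p k) : ℝ) :=
      Finset.sum_nonneg fun k _ => by positivity
    rcases le_or_gt n N with hle | hlt
    · have : μ * n ≤ μ * N := by
        apply mul_le_mul_of_nonneg_left _ hμ0
        exact_mod_cast hle
      linarith
    · -- pigeonhole
      obtain ⟨a, b, hab, heq⟩ := Fintype.exists_ne_map_eq_of_card_lt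
        (fun t : Fin (N + 1) => p t) (by simp [hN])
      -- wlog a < b
      obtain ⟨i, j, hij, hjN, hpij⟩ : ∃ i j : ℕ, i < j ∧ j ≤ N ∧ p i = p j := by
        rcases lt_or_gt_of_ne hab with h | h
        · exact ⟨a, b, h, Nat.lt_succ_iff.mp b.2, heq⟩
        · exact ⟨b, a, h, Nat.lt_succ_iff.mp a.2, heq.symm⟩
      set m₁ := j - i with hm₁
      have hm₁0 : 0 < m₁ := by omega
      set n' := n - m₁ with hn'
      have hin' : i ≤ n' := by omega
      have hn'lt : n' < n := by omega
      set q : ℕ → V := fun k => if k < i then p k else p (k + m₁) with hq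
      have hqe : ∀ k, E (q k) (q (k + 1)) := by
        intro k
        by_cases h1 : k + 1 < i
        · have h2 : k < i := by omega
          simp only [hq, if_pos h1, if_pos h2]
          exact hp k
        · by_cases h2 : k < i
          · -- k + 1 = i
            have h3 : k + 1 = i := by omega
            have h4 : i + m₁ = j := by omega
            simp only [hq, if_pos h2, if_neg h1]
            rw [h3, h4, ← hpij, ← h3]
            exact hp k
          · simp only [hq, if_neg h1, if_neg h2]
            have : k + 1 + m₁ = k + m₁ + 1 := by omega
            rw [this]
            exact hp (k + m₁)
      -- sum identity
      have hsplit : ∑ k ∈ Finset.range n, (w (p k) : ℝ) =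
          (∑ k ∈ Finset.range i, (w (p k) : ℝ)) + (∑ k ∈ Finset.Ico i j, (w (p k) : ℝ))
            + ∑ k ∈ Finset.Ico j n, (w (p k) : ℝ) := by
        rw [Finset.range_eq_Ico, ← Finset.sum_Ico_consecutive _ (Nat.zero_le j) (le_of_lt (by omega : j < n)),
          ← Finset.sum_Ico_consecutive _ (Nat.zero_le i) (le_of_lt hij), ← Finset.range_eq_Ico]
      have hqsum : ∑ k ∈ Finset.range n', (w (q k) : ℝ) =
          (∑ k ∈ Finset.range i, (w (p k) : ℝ)) + ∑ k ∈ Finset.Ico j n, (w (p k) : ℝ) := by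
        rw [Finset.range_eq_Ico, ← Finset.sum_Ico_consecutive _ (Nat.zero_le i) hin',
          ← Finset.range_eq_Ico]
        congr 1
        · apply Finset.sum_congr rfl
          intro k hk
          have : k < i := Finset.mem_range.mp hk
          simp [hq, this]
        · rw [Finset.sum_Ico_eq_sum_range, Finset.sum_Ico_eq_sum_range]
          have hc : n' - i = n - j := by omega
          rw [hc]
          apply Finset.sum_congr rfl
          intro k hk
          have h2 : ¬ (i + k < i) := by omega
          have h3 : i + k + m₁ = j + k := by omega
          simp [hq, h2, h3]
      -- cycle bound on window
      obtain ⟨c, hcper, hce, hcsum⟩ := window_cycle p hp hij hpij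
      have hwin : μ * m₁ ≤ ∑ k ∈ Finset.Ico i j, (w (p k) : ℝ) := by
        have := hcb c m₁ hm₁0 hcper hce
        rwa [hcsum (fun v => (w v : ℝ))] at this
      have hih := ih n' hn'lt q hqe
      have hcast : (n' : ℝ) = (n : ℝ) - (m₁ : ℝ) := by
        have : (m₁ : ℝ) ≤ n := by exact_mod_cast (by omega : m₁ ≤ n)
        push_cast [hn']
        rw [Nat.cast_sub (by omega : m₁ ≤ n)]
      rw [hcast] at hih
      rw [hsplit]
      rw [hqsum] at hih
      nlinarith [hwin, hih]

/-- Every cycle contains a short cycle with mean at most its own. -/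
lemma cycle_reduce (w : V → ℕ) :
    ∀ (m : ℕ), 0 < m → ∀ (c : ℕ → V), (∀ k, c (k + m) = c k) → (∀ k, E (c k) (c (k + 1))) →
      ∃ (m' : ℕ) (c' : ℕ → V), 0 < m' ∧ m' ≤ Fintype.card V ∧
        (∀ k, c' (k + m') = c' k) ∧ (∀ k, E (c' k) (c' (k + 1))) ∧
        (∑ k ∈ Finset.range m', (w (c' k) : ℝ)) / m' ≤ (∑ k ∈ Finset.range m, (w (c k) : ℝ)) / m := by
  intro m
  induction m using Nat.strong_induction_on with
  | _ m ih =>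
    intro hm0 c hper hedge
    set N := Fintype.card V with hN
    rcases le_or_gt m N with hle | hlt
    · exact ⟨m, c, hm0, hle, hper, hedge, le_refl _⟩
    · obtain ⟨a, b, hab, heq⟩ := Fintype.exists_ne_map_eq_of_card_lt
        (fun t : Fin (N + 1) => c t) (by simp [hN])
      obtain ⟨i, j, hij, hjN, hcij⟩ : ∃ i j : ℕ, i < j ∧ j ≤ N ∧ c i = c j := by
        rcases lt_or_gt_of_ne hab with h | h
        · exact ⟨a, b, h, Nat.lt_succ_iff.mp b.2, heq⟩
        · exact ⟨b, a, h, Nat.lt_succ_iff.mp a.2, heq.symm⟩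
      set m₁ := j - i with hm₁
      have hm₁0 : 0 < m₁ := by omega
      have hm₁N : m₁ ≤ N := by omega
      set m' := m - m₁ with hm'
      have hm'0 : 0 < m' := by omega
      have him' : i ≤ m' := by omega
      have hjm : j < m := by omega
      -- short cycle
      obtain ⟨c₁, hc₁per, hc₁e, hc₁sum⟩ := window_cycle c hedge hij hcij
      -- remainder cycle
      set q : ℕ → V := fun k => if k % m' < i then c (k % m') else c (k % m' + m₁) with hqdef
      have hqper : ∀ k, q (k + m') = q k := by
        intro k; simp only [hqdef, Nat.add_mod_right]
      have hqe : ∀ k, E (q k) (q (k + 1)) := by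
        intro k
        have h1 : (k + 1) % m' = (k % m' + 1) % m' := (Nat.mod_add_mod k m' 1).symm
        have hr : k % m' < m' := Nat.mod_lt _ hm'0
        rcases eq_or_lt_of_le (Nat.succ_le_of_lt hr) with h | h
        · -- wrap: k % m' = m' - 1
          simp only [Nat.succ_eq_add_one] at h
          have h2 : (k + 1) % m' = 0 := by rw [h1, h, Nat.mod_self]
          have hki : ¬ (k % m' < i) := by omega
          have h3 : k % m' + m₁ = m - 1 := by omega
          simp only [hqdef, h2, if_neg hki, h3]
          have hedge' := hedge (m - 1)
          have h4 : m - 1 + 1 = m := by omega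
          rw [h4] at hedge'
          have h5 : c m = c 0 := by have := hper 0; simpa using this
          rw [h5] at hedge'
          by_cases h6 : 0 < i
          · simpa [h6] using hedge'
          · have hi0 : i = 0 := by omega
            have : (0:ℕ) % m' = 0 := Nat.zero_mod _
            simp only [hi0, Nat.lt_irrefl, if_neg (lt_irrefl 0), this]
            have h7 : c (0 + m₁) = c 0 := by
              have : (0:ℕ) + m₁ = j := by omega
              rw [this, ← hcij, hi0]
            simp only [Nat.zero_add] at h7 ⊢
            rw [h7]
            exact hedge'
        · have h2 : (k + 1) % m' = k % m' + 1 := by rw [h1, Nat.mod_eq_of_lt h]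
          by_cases ha : k % m' + 1 < i
          · have hb : k % m' < i := by omega
            simp only [hqdef, h2, if_pos ha, if_pos hb]
            exact hedge _
          · by_cases hb : k % m' < i
            · -- k % m' + 1 = i
              have hc : k % m' + 1 = i := by omega
              simp only [hqdef, h2, if_pos hb, if_neg ha]
              rw [hc]
              have h4 : i + m₁ = j := by omega
              rw [h4, ← hcij, ← hc]
              exact hedge _
            · simp only [hqdef, h2, if_neg ha, if_neg hb]
              have : k % m' + 1 + m₁ = k % m' + m₁ + 1 := by omega
              rw [this]
              exact hedge _
      -- sums
      set Stot : ℝ := ∑ k ∈ Finset.range m, (w (c k) : ℝ) with hStot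
      set S1 : ℝ := ∑ k ∈ Finset.Ico i j, (w (c k) : ℝ) with hS1
      have hqsum : ∑ k ∈ Finset.range m', (w (q k) : ℝ) = Stot - S1 := by
        have hsplit : Stot = (∑ k ∈ Finset.range i, (w (c k) : ℝ)) + S1
            + ∑ k ∈ Finset.Ico j m, (w (c k) : ℝ) := by
          rw [hStot, Finset.range_eq_Ico,
            ← Finset.sum_Ico_consecutive _ (Nat.zero_le j) (le_of_lt hjm),
            ← Finset.sum_Ico_consecutive _ (Nat.zero_le i) (le_of_lt hij), ← Finset.range_eq_Ico]
        have hq2 : ∑ k ∈ Finset.range m', (w (q k) : ℝ) =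
            (∑ k ∈ Finset.range i, (w (c k) : ℝ)) + ∑ k ∈ Finset.Ico j m, (w (c k) : ℝ) := by
          rw [Finset.range_eq_Ico, ← Finset.sum_Ico_consecutive _ (Nat.zero_le i) him',
            ← Finset.range_eq_Ico]
          congr 1
          · apply Finset.sum_congr rfl
            intro k hk
            have hki : k < i := Finset.mem_range.mp hk
            have : k % m' = k := Nat.mod_eq_of_lt (by omega)
            simp [hqdef, this, hki]
          · rw [Finset.sum_Ico_eq_sum_range, Finset.sum_Ico_eq_sum_range]
            have hcc : m' - i = m - j := by omega
            rw [hcc]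
            apply Finset.sum_congr rfl
            intro k hk
            have hk' : k < m - j := Finset.mem_range.mp hk
            have h2 : (i + k) % m' = i + k := Nat.mod_eq_of_lt (by omega)
            have h3 : ¬ (i + k < i) := by omega
            have h4 : i + k + m₁ = j + k := by omega
            simp [hqdef, h2, h3, h4]
        rw [hq2]; linarith
      have hS1c : ∑ k ∈ Finset.range m₁, (w (c₁ k) : ℝ) = S1 := by
        rw [hm₁, hS1]; simpa using hc₁sum (fun v => (w v : ℝ))
      -- mediant
      have hmed : S1 / m₁ ≤ Stot / m ∨ (Stot - S1) / m' ≤ Stot / m := by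
        by_contra hcon
        push_neg at hcon
        obtain ⟨h1, h2⟩ := hcon
        have hm₁R : (0:ℝ) < m₁ := by exact_mod_cast hm₁0
        have hm'R : (0:ℝ) < m' := by exact_mod_cast hm'0
        have hmR : (0:ℝ) < m := by exact_mod_cast hm0
        rw [div_lt_div_iff₀ hmR hm₁R] at h1
        rw [div_lt_div_iff₀ hmR hm'R] at h2
        have hmm : (m₁ : ℝ) + m' = m := by
          have : m₁ + m' = m := by omega
          exact_mod_cast this
        have hkey : Stot * (m₁:ℝ) + Stot * m' = Stot * m := by rw [← mul_add, hmm]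
        linarith
      rcases hmed with h | h
      · refine ⟨m₁, c₁, hm₁0, hm₁N, hc₁per, hc₁e, ?_⟩
        rw [hS1c]; exact h
      · obtain ⟨m₂, c₂, h1, h2, h3, h4, h5⟩ := ih m' (by omega) hm'0 q hqper hqe
        refine ⟨m₂, c₂, h1, h2, h3, h4, ?_⟩
        rw [hqsum] at h5
        exact le_trans h5 h

lemma periodic_shift_sum (g : ℕ → ℝ) (m : ℕ) (hg : ∀ k, g (k + m) = g k) :
    ∀ t, ∑ k ∈ Finset.range m, g (t + k) = ∑ k ∈ Finset.range m, g k := by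
  intro t
  induction t with
  | zero => simp
  | succ t ih =>
    have A : ∑ k ∈ Finset.range (m + 1), g (t + k) =
        (∑ k ∈ Finset.range m, g (t + k)) + g (t + m) := Finset.sum_range_succ _ _
    have B : ∑ k ∈ Finset.range (m + 1), g (t + k) =
        (∑ k ∈ Finset.range m, g (t + (k + 1))) + g (t + 0) := Finset.sum_range_succ' _ _
    have hgg : g (t + m) = g t := hg t
    have hc : ∀ k, g (t + (k + 1)) = g (t + 1 + k) := by intro k; ring_nf
    have hB' : ∑ k ∈ Finset.range m, g (t + (k + 1)) = ∑ k ∈ Finset.range m, g (t + 1 + k) :=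
      Finset.sum_congr rfl fun k _ => hc k
    rw [hB'] at B
    simp only [Nat.add_zero] at B
    have : ∑ k ∈ Finset.range m, g (t + 1 + k) = ∑ k ∈ Finset.range m, g (t + k) := by
      linarith [A, B, hgg]
    rw [this, ih]

lemma periodic_sum_add (g : ℕ → ℝ) (m : ℕ) (hg : ∀ k, g (k + m) = g k) (n : ℕ) :
    ∑ k ∈ Finset.range (n + m), g k = (∑ k ∈ Finset.range n, g k) + ∑ k ∈ Finset.range m, g k := by
  rw [Finset.range_eq_Ico, ← Finset.sum_Ico_consecutive _ (Nat.zero_le n) (Nat.le_add_right n m),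
    ← Finset.range_eq_Ico, Finset.sum_Ico_eq_sum_range]
  congr 1
  simp only [Nat.add_sub_cancel_left]
  exact periodic_shift_sum g m hg n

lemma exists_min_cycle (w : V → ℕ)
    (hex : ∃ (m : ℕ) (c : ℕ → V), 0 < m ∧ (∀ k, c (k + m) = c k) ∧ (∀ k, E (c k) (c (k + 1)))) :
    ∃ (m : ℕ) (c : ℕ → V), 0 < m ∧ (∀ k, c (k + m) = c k) ∧ (∀ k, E (c k) (c (k + 1))) ∧
      ∀ (m₂ : ℕ) (c₂ : ℕ → V), 0 < m₂ → (∀ k, c₂ (k + m₂) = c₂ k) → (∀ k, E (c₂ k) (c₂ (k + 1))) →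
        (∑ k ∈ Finset.range m, (w (c k) : ℝ)) / m ≤ (∑ k ∈ Finset.range m₂, (w (c₂ k) : ℝ)) / m₂ := by
  classical
  set N := Fintype.card V with hN
  set W := Finset.univ.sup w with hW
  set A : Set ℝ := {x | ∃ (m : ℕ) (c : ℕ → V), 0 < m ∧ m ≤ N ∧ (∀ k, c (k + m) = c k) ∧
    (∀ k, E (c k) (c (k + 1))) ∧ x = (∑ k ∈ Finset.range m, (w (c k) : ℝ)) / m} with hA
  have hfin : A.Finite := by
    apply Set.Finite.subset (Set.Finite.image (fun q : ℕ × ℕ => (q.1 : ℝ) / q.2)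
      ((Set.finite_Iic (N * W)).prod (Set.finite_Iic N)))
    rintro x ⟨m, c, hm0, hmN, hper, hedge, hx⟩
    refine ⟨(∑ k ∈ Finset.range m, w (c k), m), ⟨?_, hmN⟩, ?_⟩
    · simp only [Set.mem_Iic]
      calc ∑ k ∈ Finset.range m, w (c k) ≤ ∑ k ∈ Finset.range m, W := by
            apply Finset.sum_le_sum
            intro k _
            exact Finset.le_sup (Finset.mem_univ _)
        _ = m * W := by simp [Finset.sum_const, mul_comm]
        _ ≤ N * W := Nat.mul_le_mul_right _ hmN
    · simp only []
      rw [hx]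
      push_cast
      rfl
  have hne : A.Nonempty := by
    obtain ⟨m, c, hm0, hper, hedge⟩ := hex
    obtain ⟨m', c', h1, h2, h3, h4, _⟩ := cycle_reduce w m hm0 c hper hedge
    exact ⟨_, m', c', h1, h2, h3, h4, rfl⟩
  have hmem : sInf A ∈ A := Set.Nonempty.csInf_mem hne hfin
  obtain ⟨m, c, hm0, hmN, hper, hedge, hval⟩ := hmem
  refine ⟨m, c, hm0, hper, hedge, ?_⟩
  intro m₂ c₂ hm₂ hper₂ hedge₂
  obtain ⟨m', c', h1, h2, h3, h4, h5⟩ := cycle_reduce w m₂ hm₂ c₂ hper₂ hedge₂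
  have hmemA : (∑ k ∈ Finset.range m', (w (c' k) : ℝ)) / m' ∈ A :=
    ⟨m', c', h1, h2, h3, h4, rfl⟩
  have := csInf_le hfin.bddBelow hmemA
  rw [← hval]
  exact le_trans this h5

end aux

set_option maxHeartbeats 1000000 in
theorem max_speed_eq_inv_min_mean_cycle
    {V : Type*} [Fintype V] (E : V → V → Prop) [DecidableRel E]
    (w : V → ℕ) (hw : ∀ v, 1 ≤ w v)
    (cyc : Set ℝ)
    (hcyc : cyc = {x : ℝ | ∃ m : ℕ, 0 < m ∧ ∃ c : ℕ → V,
      (∀ i, c (i + m) = c i) ∧ (∀ i, E (c i) (c (i + 1))) ∧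
      x = (∑ i ∈ Finset.range m, (w (c i) : ℝ)) / m})
    (hasCycle : cyc.Nonempty)
    (hreach : ∀ v : V, ∃ p : ℕ → V, (∀ i, E (p i) (p (i + 1))) ∧ ∃ n, p n = v) :
    (⨆ p : {p : ℕ → V // ∀ i, E (p i) (p (i + 1))},
        Filter.limsup
          (fun n : ℕ => (n : ℝ) / ∑ i ∈ Finset.range n, (w (p.1 i) : ℝ))
          Filter.atTop) = 1 / sInf cyc ∧
    ∃ p : ℕ → V, (∀ i, E (p i) (p (i + 1))) ∧
      (∃ N T : ℕ, 0 < T ∧ ∀ n, N ≤ n → p (n + T) = p n) ∧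
      Filter.limsup
        (fun n : ℕ => (n : ℝ) / ∑ i ∈ Finset.range n, (w (p i) : ℝ))
        Filter.atTop = 1 / sInf cyc := by
  classical
  -- extract a cycle
  have hex : ∃ (m : ℕ) (c : ℕ → V), 0 < m ∧ (∀ k, c (k + m) = c k) ∧ (∀ k, E (c k) (c (k + 1))) := by
    obtain ⟨x, hx⟩ := hasCycle
    rw [hcyc] at hx
    obtain ⟨m, hm0, c, hper, hedge, _⟩ := hx
    exact ⟨m, c, hm0, hper, hedge⟩
  obtain ⟨m₀, c₀, hm₀0, hper₀, hedge₀, hmin⟩ := exists_min_cycle w hex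
  set μ : ℝ := (∑ k ∈ Finset.range m₀, (w (c₀ k) : ℝ)) / m₀ with hμdef
  have hm₀R : (0:ℝ) < m₀ := by exact_mod_cast hm₀0
  -- μ = sInf cyc
  have hsinf : sInf cyc = μ := by
    apply IsLeast.csInf_eq
    constructor
    · rw [hcyc]; exact ⟨m₀, hm₀0, c₀, hper₀, hedge₀, rfl⟩
    · intro x hx
      rw [hcyc] at hx
      obtain ⟨m, hm0, c, hper, hedge, hxval⟩ := hx
      rw [hxval]
      exact hmin m c hm0 hper hedge
  -- 1 ≤ μ
  have hμ1 : 1 ≤ μ := by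
    rw [hμdef, le_div_iff₀ hm₀R, one_mul]
    calc (m₀ : ℝ) = ∑ k ∈ Finset.range m₀, (1:ℝ) := by simp
      _ ≤ ∑ k ∈ Finset.range m₀, (w (c₀ k) : ℝ) := by
          apply Finset.sum_le_sum; intro k _; exact_mod_cast hw (c₀ k)
  have hμ0 : 0 < μ := lt_of_lt_of_le one_pos hμ1
  have hμne : μ ≠ 0 := ne_of_gt hμ0
  -- cycle sum bound
  have hcb : ∀ (c : ℕ → V) (m : ℕ), 0 < m → (∀ k, c (k + m) = c k) →
      (∀ k, E (c k) (c (k + 1))) → μ * m ≤ ∑ k ∈ Finset.range m, (w (c k) : ℝ) := by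
    intro c m hm0 hper hedge
    have hmR : (0:ℝ) < m := by exact_mod_cast hm0
    have := hmin m c hm0 hper hedge
    rw [le_div_iff₀ hmR] at this
    rwa [hμdef]
  set N := Fintype.card V with hN
  have hlower := path_sum_lower w (le_of_lt hμ0) hcb
  -- upper bound for all paths
  have hupper : ∀ (p : ℕ → V), (∀ i, E (p i) (p (i + 1))) →
      Filter.limsup (fun n : ℕ => (n : ℝ) / ∑ i ∈ Finset.range n, (w (p i) : ℝ))
        Filter.atTop ≤ 1 / μ := by
    intro p hp
    set f : ℕ → ℝ := fun n => (n : ℝ) / ∑ i ∈ Finset.range n, (w (p i) : ℝ) with hf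
    set g : ℕ → ℝ := fun n => (n : ℝ) / (μ * n - μ * N) with hg
    have hgt : Filter.Tendsto g Filter.atTop (nhds (1 / μ)) := by
      have h1 : Filter.Tendsto (fun n : ℕ => μ - (μ * N) / n) Filter.atTop (nhds (μ - 0)) :=
        tendsto_const_nhds.sub (tendsto_const_div_atTop_nhds_zero_nat (μ * N))
      rw [sub_zero] at h1
      have h2 := h1.inv₀ hμne
      rw [show μ⁻¹ = 1 / μ by rw [one_div]] at h2
      apply h2.congr'
      filter_upwards [Filter.eventually_ge_atTop 1] with n hn
      have hn0 : (n : ℝ) ≠ 0 := by positivity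
      have : μ - (μ * N) / n = (μ * n - μ * N) / n := by field_simp
      rw [this, inv_div]
    have hev : ∀ᶠ n in Filter.atTop, f n ≤ g n := by
      filter_upwards [Filter.eventually_ge_atTop (N + 1)] with n hn
      have hnR : (N : ℝ) + 1 ≤ n := by exact_mod_cast hn
      have hpos : 0 < μ * n - μ * N := by nlinarith
      have hle : μ * n - μ * N ≤ ∑ i ∈ Finset.range n, (w (p i) : ℝ) := hlower n p hp
      have hn0 : (0:ℝ) ≤ n := by positivity
      exact div_le_div_of_nonneg_left hn0 hpos hle |>.trans_eq rfl
    calc Filter.limsup f Filter.atTop ≤ Filter.limsup g Filter.atTop := by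
          refine Filter.limsup_le_limsup hev ?_ ?_
          · apply Filter.isCoboundedUnder_le_of_le Filter.atTop (x := 0)
            intro n
            apply div_nonneg (by positivity)
            exact Finset.sum_nonneg fun k _ => by positivity
          · exact hgt.isBoundedUnder_le
      _ = 1 / μ := hgt.limsup_eq
  -- the attaining path
  set gw : ℕ → ℝ := fun k => (w (c₀ k) : ℝ) with hgw
  have hgper : ∀ k, gw (k + m₀) = gw k := fun k => by simp [hgw, hper₀ k]
  set S : ℕ → ℝ := fun n => ∑ k ∈ Finset.range n, gw k with hS
  have hSmu : S m₀ = μ * m₀ := by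
    rw [hμdef]; field_simp; rfl
  have hSadd : ∀ n, S (n + m₀) = S n + μ * m₀ := by
    intro n
    rw [hS]
    simp only []
    rw [periodic_sum_add gw m₀ hgper n, ← hSmu]
  have hbound : ∀ n, μ * n - μ * m₀ ≤ S n ∧ S n ≤ μ * n + μ * m₀ := by
    intro n
    induction n using Nat.strong_induction_on with
    | _ n ih =>
      rcases lt_or_ge n m₀ with hlt | hge
      · have hnR : (n : ℝ) ≤ m₀ := by exact_mod_cast le_of_lt hlt
        have hS0 : 0 ≤ S n := Finset.sum_nonneg fun k _ => by positivity
        have hSm : S n ≤ S m₀ := by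
          apply Finset.sum_le_sum_of_subset_of_nonneg
          · exact Finset.range_subset_range.mpr (le_of_lt hlt)
          · intro k _ _; positivity
        rw [hSmu] at hSm
        have hn0 : (0:ℝ) ≤ n := by positivity
        constructor <;> nlinarith
      · have hrec : n = (n - m₀) + m₀ := by omega
        have hcast : ((n - m₀ : ℕ) : ℝ) = (n : ℝ) - m₀ := by
          rw [Nat.cast_sub hge]
        obtain ⟨ih1, ih2⟩ := ih (n - m₀) (by omega)
        have := hSadd (n - m₀)
        rw [← hrec] at this
        rw [hcast] at ih1 ih2
        constructor <;> [nlinarith; nlinarith]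
  have hStend : Filter.Tendsto (fun n : ℕ => S n / n) Filter.atTop (nhds μ) := by
    apply tendsto_of_tendsto_of_tendsto_of_le_of_le'
      (g := fun n : ℕ => μ - (μ * m₀) / n) (h := fun n : ℕ => μ + (μ * m₀) / n)
    · have h1 : Filter.Tendsto (fun n : ℕ => μ - (μ * m₀) / n) Filter.atTop (nhds (μ - 0)) :=
        tendsto_const_nhds.sub (tendsto_const_div_atTop_nhds_zero_nat (μ * m₀))
      simpa using h1
    · have h1 : Filter.Tendsto (fun n : ℕ => μ + (μ * m₀) / n) Filter.atTop (nhds (μ + 0)) :=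
        tendsto_const_nhds.add (tendsto_const_div_atTop_nhds_zero_nat (μ * m₀))
      simpa using h1
    · filter_upwards [Filter.eventually_ge_atTop 1] with n hn
      have hnR : (0:ℝ) < n := by exact_mod_cast hn
      have h1 := (hbound n).1
      rw [show μ - (μ * m₀) / n = (μ * n - μ * m₀) / n by field_simp]
      exact div_le_div_of_nonneg_right h1 hnR.le |>.trans_eq rfl
    · filter_upwards [Filter.eventually_ge_atTop 1] with n hn
      have hnR : (0:ℝ) < n := by exact_mod_cast hn
      have h2 := (hbound n).2
      rw [show μ + (μ * m₀) / n = (μ * n + μ * m₀) / n by field_simp]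
      exact div_le_div_of_nonneg_right h2 hnR.le |>.trans_eq rfl
  have hattain : Filter.limsup (fun n : ℕ => (n : ℝ) / ∑ i ∈ Finset.range n, (w (c₀ i) : ℝ))
      Filter.atTop = 1 / μ := by
    have h2 : Filter.Tendsto (fun n : ℕ => (n : ℝ) / ∑ i ∈ Finset.range n, (w (c₀ i) : ℝ))
        Filter.atTop (nhds (1 / μ)) := by
      have := hStend.inv₀ hμne
      rw [show μ⁻¹ = 1 / μ by rw [one_div]] at this
      apply this.congr
      intro n
      rw [inv_div]
    exact h2.limsup_eq
  rw [hsinf]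
  constructor
  · -- iSup
    haveI : Nonempty {p : ℕ → V // ∀ i, E (p i) (p (i + 1))} := ⟨⟨c₀, hedge₀⟩⟩
    apply le_antisymm
    · exact ciSup_le fun p => hupper p.1 p.2
    · have hbdd : BddAbove (Set.range fun p : {p : ℕ → V // ∀ i, E (p i) (p (i + 1))} =>
          Filter.limsup (fun n : ℕ => (n : ℝ) / ∑ i ∈ Finset.range n, (w (p.1 i) : ℝ))
            Filter.atTop) := by
        refine ⟨1 / μ, ?_⟩
        rintro x ⟨p, rfl⟩
        exact hupper p.1 p.2
      have := le_ciSup hbdd (⟨c₀, hedge₀⟩ : {p : ℕ → V // ∀ i, E (p i) (p (i + 1))})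
      rw [hattain] at this
      exact this
  · exact ⟨c₀, hedge₀, ⟨0, m₀, hm₀0, fun n _ => hper₀ n⟩, hattain⟩
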